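/- The set Crit = {(v, ([u1],...,[up])) ∈ V × (ℙV1 × ... × ℙVp) : for each i, the contraction ⟨v | u1 ⊗ ... ⊗ ûi ⊗ ... ⊗ up⟩ is proportional to ui} is a smooth vector sub-bundle of the trivial bundle over ℙV1 × ... × ℙVp of rank N - (n1 + ... + np) + p, where N = n1⋯np; its fiber over ([u1],...,[up]) with each ui of norm 1 is the orthogonal complement of ⊕_{i=1}^p u1 ⊗ ... ⊗ (ui)^⊥ ⊗ ... ⊗ up. -/

import Mathlib

open BigOperators RealInnerProductSpace Finset

noncomputable section

/-- The rank-one tensor `x₁ ⊗ ⋯ ⊗ x_p`, viewed as a multi-indexed array. -/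
def rk1 {p : ℕ} (n : Fin p → ℕ) (x : ∀ i, EuclideanSpace ℝ (Fin (n i))) :
    EuclideanSpace ℝ (∀ i, Fin (n i)) :=
  WithLp.toLp 2 (fun α => ∏ i, x i (α i))

/-- The contraction `⟨v | x₁ ⊗ ⋯ x̂ᵢ ⋯ ⊗ x_p⟩ ∈ Vᵢ`. -/
def contr {p : ℕ} (n : Fin p → ℕ) (v : EuclideanSpace ℝ (∀ i, Fin (n i)))
    (x : ∀ i, EuclideanSpace ℝ (Fin (n i))) (i : Fin p) :
    EuclideanSpace ℝ (Fin (n i)) :=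
  WithLp.toLp 2 (fun a => ∑ α : ∀ j, Fin (n j),
    if α i = a then v α * ∏ j ∈ univ.erase i, x j (α j) else 0)

lemma euclid_inner {ι : Type*} [Fintype ι] (f g : EuclideanSpace ℝ ι) :
    ⟪f, g⟫ = ∑ i, f i * g i := by
  simp [PiLp.inner_apply, RCLike.inner_apply, mul_comm]

lemma mem_orth_span {E : Type*} [NormedAddCommGroup E] [InnerProductSpace ℝ E]
    {S : Set E} {v : E} :
    v ∈ (Submodule.span ℝ S)ᗮ ↔ ∀ w ∈ S, ⟪w, v⟫ = 0 := by
  constructor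
  · intro h w hw
    exact (Submodule.mem_orthogonal _ v).1 h w (Submodule.subset_span hw)
  · intro h
    rw [Submodule.mem_orthogonal]
    intro x hx
    have hle : Submodule.span ℝ S ≤ (ℝ ∙ v)ᗮ :=
      Submodule.span_le.2 fun w hw =>
        Submodule.mem_orthogonal_singleton_iff_inner_left.2 (h w hw)
    exact Submodule.mem_orthogonal_singleton_iff_inner_left.1 (hle hx)

lemma key {m : ℕ} (u c : EuclideanSpace ℝ (Fin m)) (hu : ‖u‖ = 1) :
    (∀ a b, c a * u b = c b * u a) ↔
      (∀ y : EuclideanSpace ℝ (Fin m), ⟪u, y⟫ = 0 → ⟪c, y⟫ = 0) := by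
  have huu : ⟪u, u⟫ = (1 : ℝ) := by rw [real_inner_self_eq_norm_sq, hu]; norm_num
  have hsum : ∑ b, u b * u b = (1 : ℝ) := by rw [← euclid_inner]; exact huu
  constructor
  · intro h y hy
    have hc : c = ⟪u, c⟫ • u := by
      ext a
      show c a = ⟪u, c⟫ * u a
      rw [euclid_inner, Finset.sum_mul,
        Finset.sum_congr rfl fun b _ => by rw [mul_assoc, h b a]]
      have : ∑ b, u b * (c a * u b) = c a * ∑ b, u b * u b := by
        rw [Finset.mul_sum]; exact Finset.sum_congr rfl fun b _ => by ring
      rw [this, hsum, mul_one]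
    rw [hc, real_inner_smul_left, hy, mul_zero]
  · intro h a b
    set r := ⟪u, c⟫ with hr
    have hy : ⟪u, c - r • u⟫ = 0 := by
      rw [inner_sub_right, real_inner_smul_right, huu, mul_one, sub_self]
    have h2 := h _ hy
    have h3 : ⟪r • u, c - r • u⟫ = 0 := by rw [real_inner_smul_left, hy, mul_zero]
    have h4 : c - r • u = 0 := by
      rw [← @inner_self_eq_zero ℝ, inner_sub_left, h2, h3, sub_zero]
    have hc : c = r • u := sub_eq_zero.1 h4
    rw [hc]
    show r * u a * u b = r * u b * u a
    ring

variable {p : ℕ} {n : Fin p → ℕ}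

lemma rk1_update_apply (u : ∀ i, EuclideanSpace ℝ (Fin (n i))) (i : Fin p)
    (y : EuclideanSpace ℝ (Fin (n i))) (α : ∀ j, Fin (n j)) :
    rk1 n (Function.update u i y) α = y (α i) * ∏ j ∈ univ.erase i, u j (α j) := by
  unfold rk1
  rw [PiLp.toLp_apply, ← Finset.mul_prod_erase univ _ (mem_univ i), Function.update_self]
  congr 1
  exact Finset.prod_congr rfl fun j hj => by
    rw [Function.update_of_ne (Finset.ne_of_mem_erase hj)]

lemma contr_inner (u : ∀ i, EuclideanSpace ℝ (Fin (n i)))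
    (v : EuclideanSpace ℝ (∀ i, Fin (n i))) (i : Fin p)
    (y : EuclideanSpace ℝ (Fin (n i))) :
    ⟪contr n v u i, y⟫ = ⟪v, rk1 n (Function.update u i y)⟫ := by
  rw [euclid_inner, euclid_inner]
  simp only [contr, PiLp.toLp_apply, rk1_update_apply, Finset.sum_mul, ite_mul, zero_mul]
  rw [Finset.sum_comm]
  refine Finset.sum_congr rfl fun α _ => ?_
  rw [Finset.sum_ite_eq univ (α i)]
  simp [mul_comm, mul_assoc, mul_left_comm]

lemma rk1_inner (x x' : ∀ i, EuclideanSpace ℝ (Fin (n i))) :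
    ⟪(rk1 n x : EuclideanSpace ℝ (∀ i, Fin (n i))), rk1 n x'⟫ = ∏ i, ⟪x i, x' i⟫ := by
  simp only [euclid_inner, rk1, PiLp.toLp_apply, ← Finset.prod_mul_distrib]
  rw [Finset.prod_univ_sum]
  simp

/-- `y ↦ u₁ ⊗ ⋯ ⊗ y ⊗ ⋯ ⊗ u_p` (`y` in slot `i`), as a linear map. -/
def Tmap (n : Fin p → ℕ) (u : ∀ i, EuclideanSpace ℝ (Fin (n i))) (i : Fin p) :
    EuclideanSpace ℝ (Fin (n i)) →ₗ[ℝ] EuclideanSpace ℝ (∀ j, Fin (n j)) where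
  toFun y := rk1 n (Function.update u i y)
  map_add' y z := by
    ext α
    show rk1 n (Function.update u i (y + z)) α
      = rk1 n (Function.update u i y) α + rk1 n (Function.update u i z) α
    simp only [rk1_update_apply]
    have : (y + z) (α i) = y (α i) + z (α i) := rfl
    rw [this]; ring
  map_smul' r y := by
    ext α
    show rk1 n (Function.update u i (r • y)) α = r * rk1 n (Function.update u i y) α
    simp only [rk1_update_apply]
    have : (r • y) (α i) = r * y (α i) := rfl
    rw [this]; ring

/-- The sum-of-slotted-tensors map `(y₁,…,y_p) ↦ ∑ᵢ u₁ ⊗ ⋯ ⊗ yᵢ ⊗ ⋯ ⊗ u_p`, defined on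
the product of the orthogonal complements of the `uᵢ`. -/
def Psi (n : Fin p → ℕ) (u : ∀ i, EuclideanSpace ℝ (Fin (n i))) :
    (∀ i, ↥((ℝ ∙ u i)ᗮ)) →ₗ[ℝ] EuclideanSpace ℝ (∀ j, Fin (n j)) where
  toFun y := ∑ i, Tmap n u i (y i)
  map_add' y z := by
    simp only [Pi.add_apply, Submodule.coe_add, map_add]
    exact Finset.sum_add_distrib
  map_smul' r y := by
    simp only [Pi.smul_apply, Submodule.coe_smul, map_smul, RingHom.id_apply]
    exact (Finset.smul_sum).symm

theorem crit_fiber (p : ℕ) (n : Fin p → ℕ)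
    (u : ∀ i, EuclideanSpace ℝ (Fin (n i))) (hu : ∀ i, ‖u i‖ = 1) :
    {v : EuclideanSpace ℝ (∀ i, Fin (n i)) |
        ∀ (i : Fin p) (a b : Fin (n i)),
          contr n v u i a * u i b = contr n v u i b * u i a} =
      ↑((⨆ i : Fin p, Submodule.span ℝ
          {w : EuclideanSpace ℝ (∀ i, Fin (n i)) |
            ∃ y : EuclideanSpace ℝ (Fin (n i)), ⟪u i, y⟫ = 0 ∧
              w = rk1 n (Function.update u i y)})ᗮ) ∧
    Module.finrank ℝ
        ((⨆ i : Fin p, Submodule.span ℝ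
          {w : EuclideanSpace ℝ (∀ i, Fin (n i)) |
            ∃ y : EuclideanSpace ℝ (Fin (n i)), ⟪u i, y⟫ = 0 ∧
              w = rk1 n (Function.update u i y)})ᗮ) + ∑ i, n i =
      (∏ i, n i) + p := by
  have huu : ∀ i, ⟪u i, u i⟫ = (1 : ℝ) := fun i => by
    rw [real_inner_self_eq_norm_sq, hu]; norm_num
  have hne : ∀ i, u i ≠ 0 := fun i h0 => by simpa [h0] using hu i
  set W : Submodule ℝ (EuclideanSpace ℝ (∀ i, Fin (n i))) :=
    ⨆ i : Fin p, Submodule.span ℝ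
      {w : EuclideanSpace ℝ (∀ i, Fin (n i)) |
        ∃ y : EuclideanSpace ℝ (Fin (n i)), ⟪u i, y⟫ = 0 ∧
          w = rk1 n (Function.update u i y)} with hWdef
  constructor
  · -- set equality
    ext v
    simp only [Set.mem_setOf_eq, SetLike.mem_coe, hWdef]
    rw [← Submodule.iInf_orthogonal, Submodule.mem_iInf]
    refine forall_congr' fun i => ?_
    rw [mem_orth_span, key (u i) (contr n v u i) (hu i)]
    constructor
    · intro h w hw
      obtain ⟨y, hy, rfl⟩ := hw
      rw [real_inner_comm, ← contr_inner]
      exact h y hy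
    · intro h y hy
      rw [contr_inner, real_inner_comm]
      exact h _ ⟨y, hy, rfl⟩
  · -- rank computation
    -- `W` is the range of `Psi`
    have hWrange : W = LinearMap.range (Psi n u) := by
      apply le_antisymm
      · refine iSup_le fun i => Submodule.span_le.2 ?_
        rintro w ⟨y, hy, rfl⟩
        set x : ↥((ℝ ∙ u i)ᗮ) :=
          ⟨y, Submodule.mem_orthogonal_singleton_iff_inner_right.2 hy⟩ with hx
        refine ⟨Pi.single i x, ?_⟩
        have hPsi : Psi n u (Pi.single i x) = ∑ j, Tmap n u j
            (((Pi.single i x : ∀ j, ↥((ℝ ∙ u j)ᗮ)) j : EuclideanSpace ℝ (Fin (n j)))) := rfl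
        rw [hPsi, Finset.sum_eq_single i]
        · rw [Pi.single_eq_same]
          rfl
        · intro j _ hj
          rw [Pi.single_eq_of_ne hj]
          exact map_zero _
        · exact fun h => absurd (mem_univ i) h
      · rintro w ⟨y, rfl⟩
        show (∑ i, Tmap n u i (y i)) ∈ W
        refine Submodule.sum_mem _ fun i _ => ?_
        refine Submodule.mem_iSup_of_mem i (Submodule.subset_span ?_)
        exact ⟨y i, Submodule.mem_orthogonal_singleton_iff_inner_right.1 (y i).2, rfl⟩
    -- `Psi` is injective
    have hTinner : ∀ (i j : Fin p) (y : EuclideanSpace ℝ (Fin (n i)))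
        (z : EuclideanSpace ℝ (Fin (n j))),
        ⟪Tmap n u i y, Tmap n u j z⟫
          = ∏ k, ⟪Function.update u i y k, Function.update u j z k⟫ :=
      fun i j y z => rk1_inner _ _
    have hinj : Function.Injective (Psi n u) := by
      rw [← LinearMap.ker_eq_bot]
      rw [eq_bot_iff]
      intro y hy
      have hy0 : (∑ i, Tmap n u i (y i)) = 0 := hy
      rw [Submodule.mem_bot]
      funext j
      have horth : ∀ i, i ≠ j →
          ⟪Tmap n u i ((y i : EuclideanSpace ℝ (Fin (n i)))), Tmap n u j (y j)⟫ = 0 := by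
        intro i hij
        rw [hTinner]
        apply Finset.prod_eq_zero (mem_univ i)
        rw [Function.update_self, Function.update_of_ne hij]
        exact Submodule.mem_orthogonal_singleton_iff_inner_left.1 (y i).2
      have hdiag : ⟪Tmap n u j ((y j : EuclideanSpace ℝ (Fin (n j)))), Tmap n u j (y j)⟫
          = ⟪(y j : EuclideanSpace ℝ (Fin (n j))), (y j : EuclideanSpace ℝ (Fin (n j)))⟫ := by
        rw [hTinner]
        rw [Finset.prod_eq_single j]
        · rw [Function.update_self]
        · intro k _ hk
          rw [Function.update_of_ne hk]
          exact huu k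
        · exact fun h => absurd (mem_univ j) h
      have hzero : ⟪(y j : EuclideanSpace ℝ (Fin (n j))), (y j : EuclideanSpace ℝ (Fin (n j)))⟫
          = 0 := by
        have h0 : ⟪(∑ i, Tmap n u i (y i)), Tmap n u j (y j)⟫ = 0 := by
          rw [hy0, inner_zero_left]
        rw [sum_inner] at h0
        have hsum2 : (∑ i, ⟪Tmap n u i ((y i : EuclideanSpace ℝ (Fin (n i)))),
            Tmap n u j ((y j : EuclideanSpace ℝ (Fin (n j))))⟫)
            = ⟪Tmap n u j ((y j : EuclideanSpace ℝ (Fin (n j)))),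
              Tmap n u j ((y j : EuclideanSpace ℝ (Fin (n j))))⟫ :=
          Finset.sum_eq_single j (fun i _ hij => horth i hij)
            (fun h => absurd (mem_univ j) h)
        rw [hsum2, hdiag] at h0
        exact h0
      have : (y j : EuclideanSpace ℝ (Fin (n j))) = 0 := inner_self_eq_zero.1 hzero
      exact Subtype.ext this
    have hfrW : Module.finrank ℝ W = ∑ i, Module.finrank ℝ ((ℝ ∙ u i)ᗮ) := by
      rw [hWrange, LinearMap.finrank_range_of_inj hinj, Module.finrank_pi_fintype ℝ]
    have hfr : ∀ i, Module.finrank ℝ ((ℝ ∙ u i)ᗮ) + 1 = n i := by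
      intro i
      have h1 := Submodule.finrank_add_finrank_orthogonal (K := (ℝ ∙ u i))
      rw [finrank_span_singleton (hne i), finrank_euclideanSpace_fin] at h1
      omega
    have hsum : Module.finrank ℝ W + p = ∑ i, n i := by
      rw [hfrW, ← Finset.sum_congr rfl fun i _ => hfr i, Finset.sum_add_distrib]
      simp
    have htot := Submodule.finrank_add_finrank_orthogonal (K := W)
    have hbig : Module.finrank ℝ (EuclideanSpace ℝ (∀ i, Fin (n i))) = ∏ i, n i := by
      rw [finrank_euclideanSpace]
      simp [Fintype.card_pi]
    rw [hbig] at htot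
    omega
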